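/- Let R be a p-adically complete ring (p a non-zero-divisor), and suppose sequences of matrices B_n ∈ Mat_d(R), C_n ∈ Mat_d(R), Q_n ∈ p·Mat_d(R) satisfy C_{n+1} = B_n φ(C_n) φ(B_n'), B_{n+1} = B_n + C_{n+1} t + Q_n, with B_n B_n' = E^{p−1}·Id for a fixed E ∈ R with φ(E)^{p−1} ∈ p^{p−1}R^× conventions ensuring C_i φ(B_{i−1}) ∈ p·Mat_d(R), for a ring endomorphism φ of R and fixed t ∈ R. If the products ∏_{i=0}^n φ^i(B_0) converge to 0 p-adically as n → ∞, then C_{n+1} ∈ p·Mat_d(R) for all sufficiently large n. -/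

import Mathlib

open Matrix

section Aux

variable {R : Type} [CommRing R] {d : ℕ}

/-- entrywise ideal membership -/
def EntryMemI (I : Ideal R) (A : Matrix (Fin d) (Fin d) R) : Prop := ∀ i j, A i j ∈ I

namespace EntryMemI

variable {I : Ideal R} {A A' : Matrix (Fin d) (Fin d) R}

lemma add (hA : EntryMemI I A) (hA' : EntryMemI I A') : EntryMemI I (A + A') :=
  fun i j => by simpa using I.add_mem (hA i j) (hA' i j)

lemma mul_left (hA : EntryMemI I A) (X : Matrix (Fin d) (Fin d) R) : EntryMemI I (X * A) :=
  fun i j => by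
    rw [Matrix.mul_apply]
    exact I.sum_mem fun k _ => I.mul_mem_left _ (hA k j)

lemma mul_right (hA : EntryMemI I A) (X : Matrix (Fin d) (Fin d) R) : EntryMemI I (A * X) :=
  fun i j => by
    rw [Matrix.mul_apply]
    exact I.sum_mem fun k _ => I.mul_mem_right _ (hA i k)

lemma smul (hA : EntryMemI I A) (t : R) : EntryMemI I (t • A) :=
  fun i j => by
    rw [Matrix.smul_apply, smul_eq_mul]
    exact I.mul_mem_left _ (hA i j)

end EntryMemI

lemma iter_mem_span (p : ℕ) (φ : R →+* R) {x : R} (hx : x ∈ Ideal.span {(p : R)}) (k : ℕ) :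
    (⇑φ)^[k] x ∈ Ideal.span {(p : R)} := by
  rw [Ideal.mem_span_singleton] at hx ⊢
  obtain ⟨c, rfl⟩ := hx
  rw [← RingHom.coe_pow]
  exact ⟨(φ ^ k) c, by rw [_root_.map_mul, map_natCast]⟩

lemma EntryMemI.mapIter {p : ℕ} {φ : R →+* R} {A : Matrix (Fin d) (Fin d) R}
    (hA : EntryMemI (Ideal.span {(p : R)}) A) (k : ℕ) :
    EntryMemI (Ideal.span {(p : R)}) (A.map (⇑φ)^[k]) :=
  fun i j => iter_mem_span p φ (hA i j) k

end Aux

/-- Key convergence argument in the essential surjectivity proof.  Over a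
`p`-adically complete ring `R` with endomorphism `φ`, given sequences of matrices `B_n`, `C_n`,
and `Q_n ∈ p·Mat_d(R)` with `C_{n+1} = B_n φ(C_n) φ(B_n')`, `B_{n+1} = B_n + t·C_{n+1} + Q_n`,
`B_n B_n' = E^(p−1)·Id`, and `C_{i+1} φ(B_i) ∈ p·Mat_d(R)`: if the products
`∏_{i=0}^n φ^i(B_0)` tend to `0` `p`-adically, then `C_{n+1} ∈ p·Mat_d(R)` for all
sufficiently large `n`. -/
theorem eventually_divisible_by_p (p : ℕ) [Fact p.Prime]
    {R : Type} [CommRing R] [IsAdicComplete (Ideal.span {(p : R)}) R]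
    (φ : R →+* R) (t E : R) {d : ℕ}
    (B B' C Q : ℕ → Matrix (Fin d) (Fin d) R)
    (hQp : ∀ n, ∀ i j, Q n i j ∈ Ideal.span {(p : R)})
    (hC : ∀ n, C (n + 1) = B n * (C n).map ⇑φ * (B' n).map ⇑φ)
    (hB : ∀ n, B (n + 1) = B n + t • C (n + 1) + Q n)
    (hBB' : ∀ n, B n * B' n = E ^ (p - 1) • 1)
    (hconv : ∀ n, ∀ i j, (C (n + 1) * (B n).map ⇑φ) i j ∈ Ideal.span {(p : R)})
    (hlim : ∀ m : ℕ, ∃ N : ℕ, ∀ n ≥ N, ∀ i j,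
      (((List.range (n + 1)).map fun l => (B 0).map ((⇑φ)^[l])).prod) i j ∈
        Ideal.span {(p : R)} ^ m) :
    ∃ N : ℕ, ∀ n ≥ N, ∀ i j, C (n + 1) i j ∈ Ideal.span {(p : R)} := by
  set I : Ideal R := Ideal.span {(p : R)} with hI
  -- the "front" product F n = B_n φ(B_{n-1}) ⋯ φⁿ(B_0)
  set F : ℕ → Matrix (Fin d) (Fin d) R :=
    fun n => ((List.range (n + 1)).map fun j => (B (n - j)).map (⇑φ)^[j]).prod with hFdef
  -- the comparison product G n = B_0 φ(B_0) ⋯ φⁿ(B_0)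
  set G : ℕ → Matrix (Fin d) (Fin d) R :=
    fun n => ((List.range (n + 1)).map fun l => (B 0).map (⇑φ)^[l]).prod with hGdef
  have hF0 : F 0 = B 0 := by
    simp [hFdef, List.range_succ]
  have hG0 : G 0 = B 0 := by
    simp [hGdef, List.range_succ]
  have hGs : ∀ n, G (n + 1) = G n * (B 0).map (⇑φ)^[n + 1] := by
    intro n
    simp [hGdef, List.range_succ]
  have hFs : ∀ n, F (n + 1) = B (n + 1) * (F n).map ⇑φ := by
    intro n
    have hmap : (F n).map ⇑φ =
        ((List.range (n + 1)).map fun j => (B (n - j)).map (⇑φ)^[j + 1]).prod := by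
      have := map_list_prod (φ.mapMatrix (m := Fin d))
        ((List.range (n + 1)).map fun j => (B (n - j)).map (⇑φ)^[j])
      simp only [RingHom.mapMatrix_apply] at this
      rw [hFdef]
      simp only []
      rw [this, List.map_map]
      congr 1
      apply List.map_congr_left
      intro j _
      simp only [Function.comp_apply, RingHom.mapMatrix_apply, Matrix.map_map]
      rw [← Function.iterate_succ']
    rw [hmap]
    have hr : List.range (n + 1 + 1) = 0 :: (List.range (n + 1)).map Nat.succ :=
      List.range_succ_eq_map
    simp only [hFdef]
    rw [hr, List.map_cons, List.prod_cons, List.map_map]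
    have h0 : (B (n + 1 - 0)).map (⇑φ)^[0] = B (n + 1) := by
      simp
    rw [h0]
    congr 1
    congr 1
    apply List.map_congr_left
    intro j _
    have h1 : n + 1 - Nat.succ j = n - j := by omega
    simp only [Function.comp_apply, h1]
  -- key divisibility: (B_{m+1} - B_m) φ(F_m) ∈ p
  have key : ∀ m, EntryMemI I ((B (m + 1) - B m) * (F m).map ⇑φ) := by
    intro m
    have hdiff : B (m + 1) - B m = t • C (m + 1) + Q m := by
      rw [hB m]; abel
    rw [hdiff, add_mul]
    have hCF : EntryMemI I (C (m + 1) * (F m).map ⇑φ) := by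
      cases m with
      | zero =>
        rw [hF0]
        exact fun i j => hconv 0 i j
      | succ k =>
        rw [hFs k, Matrix.map_mul, ← mul_assoc]
        exact EntryMemI.mul_right (fun i j => hconv (k + 1) i j) _
    apply EntryMemI.add
    · rw [smul_mul_assoc]
      exact hCF.smul t
    · exact EntryMemI.mul_right (fun i j => hQp m i j) _
  -- the sweep: F n ≡ H n k * φ^k (F (n-k)) mod p
  set H : ℕ → ℕ → Matrix (Fin d) (Fin d) R :=
    fun n k => ((List.range k).map fun j => (B (n - 1 - j)).map (⇑φ)^[j]).prod with hHdef
  have sweep : ∀ n k, k ≤ n → EntryMemI I (F n - H n k * (F (n - k)).map (⇑φ)^[k]) := by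
    intro n k
    induction k with
    | zero =>
      intro _
      simp only [hHdef, List.range_zero, List.map_nil, List.prod_nil, Nat.sub_zero,
        Function.iterate_zero, Matrix.map_id, one_mul, sub_self]
      intro i j
      simp
    | succ k ih =>
      intro hk
      have hk' : k ≤ n := by omega
      set m := n - (k + 1) with hm
      have hnk : n - k = m + 1 := by omega
      have hn1k : n - 1 - k = m := by omega
      have hH : H n (k + 1) = H n k * (B m).map (⇑φ)^[k] := by
        simp [hHdef, List.range_succ, hn1k]
      have hbracket : (F (m + 1)).map (⇑φ)^[k] - (B m).map (⇑φ)^[k] * (F m).map (⇑φ)^[k + 1]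
          = (((B (m + 1) - B m) * (F m).map ⇑φ).map (⇑φ)^[k]) := by
        have hco : (⇑φ)^[k] = ⇑(φ ^ k) := (RingHom.coe_pow φ k).symm
        rw [hco, sub_mul, hFs m]
        rw [Matrix.map_sub ⇑(φ ^ k) (fun a b => map_sub (φ ^ k) a b),
          Matrix.map_mul, Matrix.map_mul,
          show (⇑φ)^[k + 1] = ⇑(φ ^ k) ∘ ⇑φ from by rw [Function.iterate_succ, hco],
          ← Matrix.map_map]
      have hmem : EntryMemI I (H n k *
          ((F (m + 1)).map (⇑φ)^[k] - (B m).map (⇑φ)^[k] * (F m).map (⇑φ)^[k + 1])) := by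
        rw [hbracket]
        exact ((key m).mapIter k).mul_left _
      have heq : F n - H n (k + 1) * (F (n - (k + 1))).map (⇑φ)^[k + 1]
          = (F n - H n k * (F (n - k)).map (⇑φ)^[k]) + H n k *
            ((F (m + 1)).map (⇑φ)^[k] - (B m).map (⇑φ)^[k] * (F m).map (⇑φ)^[k + 1]) := by
        rw [hH, hnk, ← hm, mul_sub, mul_assoc]
        abel
      rw [heq]
      exact (ih hk').add hmem
  -- H (n+1) (n+1) = F n
  have hHF : ∀ n, H (n + 1) (n + 1) = F n := by
    intro n
    rfl
  -- F n ≡ G n mod p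
  have FG : ∀ n, EntryMemI I (F n - G n) := by
    intro n
    induction n with
    | zero =>
      rw [hF0, hG0, sub_self]
      intro i j; simp
    | succ n ih =>
      have hsweep := sweep (n + 1) (n + 1) le_rfl
      rw [hHF n, Nat.sub_self, hF0] at hsweep
      have heq : F (n + 1) - G (n + 1)
          = (F (n + 1) - F n * (B 0).map (⇑φ)^[n + 1])
            + (F n - G n) * (B 0).map (⇑φ)^[n + 1] := by
        rw [hGs n, sub_mul]
        abel
      rw [heq]
      exact hsweep.add (ih.mul_right _)
  -- C (n+1) = F n * X for some X
  have exX : ∀ n, ∃ X, C (n + 1) = F n * X := by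
    intro n
    induction n with
    | zero =>
      exact ⟨(C 0).map ⇑φ * (B' 0).map ⇑φ, by rw [hC 0, hF0, mul_assoc]⟩
    | succ n ih =>
      obtain ⟨X, hX⟩ := ih
      refine ⟨X.map ⇑φ * (B' (n + 1)).map ⇑φ, ?_⟩
      rw [hC (n + 1), hX, Matrix.map_mul, hFs n, mul_assoc, mul_assoc, mul_assoc]
  obtain ⟨N, hN⟩ := hlim 1
  refine ⟨N, fun n hn i j => ?_⟩
  obtain ⟨X, hX⟩ := exX n
  have hG : EntryMemI I (G n) := by
    intro i j
    have := hN n hn i j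
    rwa [pow_one] at this
  have hfin : EntryMemI I (C (n + 1)) := by
    have : C (n + 1) = (F n - G n) * X + G n * X := by
      rw [hX, sub_mul]; abel
    rw [this]
    exact ((FG n).mul_right X).add (hG.mul_right X)
  exact hfin i j
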